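/- Let i ∈ {1,…,n} with ker(π_{i}) ∩ L = {0}, and let S ⊆ L^{i} := π_{i}(L). Then S is an ω̄^i-Gröbner basis of L^{i} if and only if π_{i}⁻¹(S) is an ē^i-Gröbner basis of L. -/

import Mathlib

open scoped Classical

noncomputable section

variable {ι : Type*} [Fintype ι]

/-- `x ∈ ℕ^n`, i.e. all coordinates nonnegative. -/
def Nonneg (x : ι → ℤ) : Prop := ∀ i, 0 ≤ x i

/-- componentwise positive part `u⁺`. -/
def vposPart (x : ι → ℤ) : ι → ℤ := fun i => max (x i) 0

/-- componentwise negative part `u⁻`. -/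
def vnegPart (x : ι → ℤ) : ι → ℤ := fun i => max (-x i) 0

/-- support of a vector. -/
def suppV (x : ι → ℤ) : Set ι := {i | x i ≠ 0}

/-- membership in the fiber `F_{L,b} = {x ∈ ℕ^n : x ≡ b (mod L)}`. -/
def inFiber (L : AddSubgroup (ι → ℤ)) (b x : ι → ℤ) : Prop :=
  Nonneg x ∧ x - b ∈ L

/-- adjacency in the fiber graph: `x` and `y` differ by an element of `±S`. -/
def adjS (S : Set (ι → ℤ)) (x y : ι → ℤ) : Prop := x - y ∈ S ∨ y - x ∈ S

/-- `p 0, p 1, …, p k` is a path in the fiber graph `G(F_{L,b}, S)`. -/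
def IsPathIn (L : AddSubgroup (ι → ℤ)) (S : Set (ι → ℤ)) (b : ι → ℤ)
    (k : ℕ) (p : ℕ → ι → ℤ) : Prop :=
  (∀ i ≤ k, inFiber L b (p i)) ∧ ∀ i < k, adjS S (p i) (p (i+1))

/-- `x` and `y` are connected in the fiber graph `G(F_{L,b}, S)`. -/
def ConnIn (L : AddSubgroup (ι → ℤ)) (S : Set (ι → ℤ)) (b x y : ι → ℤ) : Prop :=
  ∃ k p, IsPathIn L S b k p ∧ p 0 = x ∧ p k = y

/-- `S` is a generating set of the lattice `L`: all fiber graphs are connected. -/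
def IsGenSet (L : AddSubgroup (ι → ℤ)) (S : Set (ι → ℤ)) : Prop :=
  ∀ b x y, inFiber L b x → inFiber L b y → ConnIn L S b x y

/-- `succ` (written `≻`) is a term ordering for `L`: an additive total
well-ordering on every fiber. -/
structure IsTermOrder (L : AddSubgroup (ι → ℤ))
    (succ : (ι → ℤ) → (ι → ℤ) → Prop) : Prop where
  trans : ∀ {x y z}, succ x y → succ y z → succ x z
  irrefl : ∀ x, ¬ succ x x
  total : ∀ b x y, inFiber L b x → inFiber L b y → x ≠ y → succ x y ∨ succ y x
  additive : ∀ x y γ, Nonneg γ → succ x y → succ (x + γ) (y + γ)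
  wf : ∀ b, WellFounded (fun x y : ι → ℤ => inFiber L b x ∧ inFiber L b y ∧ succ y x)

/-- `L_≻ = {u ∈ L : u⁺ ≻ u⁻}`. -/
def Lpos (L : AddSubgroup (ι → ℤ)) (succ : (ι → ℤ) → (ι → ℤ) → Prop) :
    Set (ι → ℤ) :=
  {u | u ∈ L ∧ succ (vposPart u) (vnegPart u)}

/-- `m` is the `≻`-minimal element of the fiber `F_{L,b}`. -/
def IsMinimalFiber (L : AddSubgroup (ι → ℤ)) (b : ι → ℤ)
    (succ : (ι → ℤ) → (ι → ℤ) → Prop) (m : ι → ℤ) : Prop :=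
  inFiber L b m ∧ ∀ y, inFiber L b y → y ≠ m → succ y m

/-- `G` is a `≻`-Gröbner basis of `L`: from every `x ∈ ℕ^n` there is a
`≻`-decreasing path in `G(F_{L,x},G)` to the `≻`-minimal element of `F_{L,x}`. -/
def IsGroebner (L : AddSubgroup (ι → ℤ)) (succ : (ι → ℤ) → (ι → ℤ) → Prop)
    (G : Set (ι → ℤ)) : Prop :=
  ∀ x, Nonneg x → ∃ m, IsMinimalFiber L x succ m ∧
    ∃ k p, IsPathIn L G x k p ∧ p 0 = x ∧ p k = m ∧ ∀ i < k, succ (p i) (p (i+1))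

/-- there is a `≻`-reduction path from `x` to `y` in `G(F_{L,b},G)`:
no intermediate node is `≻` than both endpoints. -/
def IsRedPath (L : AddSubgroup (ι → ℤ)) (G : Set (ι → ℤ)) (b : ι → ℤ)
    (succ : (ι → ℤ) → (ι → ℤ) → Prop) (x y : ι → ℤ) : Prop :=
  ∃ k p, IsPathIn L G b k p ∧ p 0 = x ∧ p k = y ∧
    ∀ i, 0 < i → i < k → ¬ (succ (p i) x ∧ succ (p i) y)

/-- `(x,z,y)` is a `≻`-critical path in `G(F_{L,b},G)`. -/
def IsCriticalIn (L : AddSubgroup (ι → ℤ)) (G : Set (ι → ℤ)) (b : ι → ℤ)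
    (succ : (ι → ℤ) → (ι → ℤ) → Prop) (x z y : ι → ℤ) : Prop :=
  inFiber L b x ∧ inFiber L b z ∧ inFiber L b y ∧
  adjS G x z ∧ adjS G z y ∧ succ z x ∧ succ z y

/-- `z^(u,v) := max{u⁺, v⁺}` componentwise. -/
def zOf (u v : ι → ℤ) : ι → ℤ := fun i => max (vposPart u i) (vposPart v i)

/-- `x^(u,v) := z^(u,v) − u`. -/
def xOf (u v : ι → ℤ) : ι → ℤ := zOf u v - u

/-- `y^(u,v) := z^(u,v) − v`. -/
def yOf (u v : ι → ℤ) : ι → ℤ := zOf u v - v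

/-- `(x,z,y)` is a `≻`-critical path for the pair `(u,v)`. -/
def IsCriticalFor (succ : (ι → ℤ) → (ι → ℤ) → Prop) (u v x z y : ι → ℤ) : Prop :=
  Nonneg x ∧ Nonneg z ∧ Nonneg y ∧ z - x = u ∧ z - y = v ∧ succ z x ∧ succ z y

/-- rational inner product `φ·x`. -/
def qdot (φ : ι → ℚ) (x : ι → ℤ) : ℚ := ∑ i, φ i * (x i : ℚ)

/-- there is a `φ`-reduction path from `x` to `y` in `G(F_{L,b},G)`. -/
def IsPhiRedPath (L : AddSubgroup (ι → ℤ)) (G : Set (ι → ℤ)) (b : ι → ℤ)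
    (φ : ι → ℚ) (x y : ι → ℤ) : Prop :=
  ∃ k p, IsPathIn L G b k p ∧ p 0 = x ∧ p k = y ∧
    ∀ i, 0 < i → i < k → ¬ (qdot φ x < qdot φ (p i) ∧ qdot φ y < qdot φ (p i))

/-- `G` is a `φ`-Gröbner basis of `L`. -/
def IsPhiGroebner (L : AddSubgroup (ι → ℤ)) (φ : ι → ℚ) (G : Set (ι → ℤ)) : Prop :=
  ∀ b x y, inFiber L b x → inFiber L b y → IsPhiRedPath L G b φ x y

/-- `x ∧_σ y`: componentwise min on `σ`, zero elsewhere. -/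
def meetOn (σ : Set ι) (x y : ι → ℤ) : ι → ℤ :=
  fun i => if i ∈ σ then min (x i) (y i) else 0

/-- `T` is `σ`-saturated on `S`. -/
def IsSaturatedOn (L : AddSubgroup (ι → ℤ)) (σ : Set ι) (S T : Set (ι → ℤ)) : Prop :=
  ∀ b x y, inFiber L b x → inFiber L b y → ConnIn L S b x y →
    ConnIn L T (b - meetOn σ x y) (x - meetOn σ x y) (y - meetOn σ x y)

/-- membership in `F^σ_{L,b}`: nonnegative outside `σ`. -/
def inFiberFree (L : AddSubgroup (ι → ℤ)) (σ : Set ι) (b x : ι → ℤ) : Prop :=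
  (∀ i, i ∉ σ → 0 ≤ x i) ∧ x - b ∈ L

/-- path in the graph `G(F^σ_{L,b}, S)`. -/
def IsPathFree (L : AddSubgroup (ι → ℤ)) (σ : Set ι) (S : Set (ι → ℤ)) (b : ι → ℤ)
    (k : ℕ) (p : ℕ → ι → ℤ) : Prop :=
  (∀ i ≤ k, inFiberFree L σ b (p i)) ∧ ∀ i < k, adjS S (p i) (p (i+1))

/-- connectivity in `G(F^σ_{L,b}, S)`. -/
def ConnFree (L : AddSubgroup (ι → ℤ)) (σ : Set ι) (S : Set (ι → ℤ))
    (b x y : ι → ℤ) : Prop :=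
  ∃ k p, IsPathFree L σ S b k p ∧ p 0 = x ∧ p k = y

/-- `S` is a `σ`-generating set of `L`. -/
def IsGenSetFree (L : AddSubgroup (ι → ℤ)) (σ : Set ι) (S : Set (ι → ℤ)) : Prop :=
  ∀ b x y, inFiberFree L σ b x → inFiberFree L σ b y → ConnFree L σ S b x y

/-- there is a `z`-bounded path from `x` to `y` in `G(F_{L,b},G)`:
all nodes are `≺ z`. -/
def IsBoundedPath (L : AddSubgroup (ι → ℤ)) (G : Set (ι → ℤ)) (b : ι → ℤ)
    (succ : (ι → ℤ) → (ι → ℤ) → Prop) (z x y : ι → ℤ) : Prop :=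
  ∃ k p, IsPathIn L G b k p ∧ p 0 = x ∧ p k = y ∧ ∀ i ≤ k, succ z (p i)

/-- `ē^i = −e^i` as a rational vector. -/
def ebar [DecidableEq ι] (i : ι) : ι → ℚ := fun j => if j = i then -1 else 0

/-- projection deleting the `i`-th coordinate. -/
def projCoord {n : ℕ} (i : Fin (n+1)) : (Fin (n+1) → ℤ) →+ (Fin n → ℤ) where
  toFun x := fun j => x (i.succAbove j)
  map_zero' := rfl
  map_add' _ _ := rfl

/-- projection onto the coordinates outside `σ`. -/
def projSet {n : ℕ} (σ : Finset (Fin n)) :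
    (Fin n → ℤ) →+ ({ i : Fin n // i ∉ σ } → ℤ) where
  toFun x := fun j => x j.1
  map_zero' := rfl
  map_add' _ _ := rfl

end

section Helpers
variable {ι : Type*} [Fintype ι]

lemma qdot_sub' (φ : ι → ℚ) (a b : ι → ℤ) : qdot φ (a - b) = qdot φ a - qdot φ b := by
  simp [qdot, mul_sub, Finset.sum_sub_distrib]

lemma qdot_neg' (φ : ι → ℚ) (a : ι → ℤ) : qdot (-φ) a = - qdot φ a := by
  simp [qdot, Finset.sum_neg_distrib]

lemma qdot_ebar' [DecidableEq ι] (i : ι) (x : ι → ℤ) : qdot (ebar i) x = -(x i) := by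
  simp [qdot, ebar, ite_mul]

end Helpers

lemma projCoord_insertNth {n : ℕ} (i : Fin (n+1)) (a : ℤ) (v : Fin n → ℤ) :
    projCoord i (Fin.insertNth i a v : Fin (n+1) → ℤ) = v :=
  funext fun m => by simp [projCoord]

/-- with `ker(π_i) ∩ L = {0}` and `S ⊆ L^i`, `S` is an
`ω̄^i`-Gröbner basis of `L^i` iff `π_i⁻¹(S)` is an `ē^i`-Gröbner basis
of `L`. -/
theorem stmt12 {n : ℕ} (L : AddSubgroup (Fin (n+1) → ℤ))
    (hL : ∀ u ∈ L, Nonneg u → u = 0) (i : Fin (n+1))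
    (hker : ∀ u ∈ L, projCoord i u = 0 → u = 0)
    (ω : Fin n → ℚ) (hω : ∀ u ∈ L, qdot ω (projCoord i u) = (u i : ℚ))
    (S : Set (Fin n → ℤ)) (hS : ∀ s ∈ S, s ∈ L.map (projCoord i)) :
    IsPhiGroebner (L.map (projCoord i)) (-ω) S ↔
      IsPhiGroebner L (ebar i) {u | u ∈ L ∧ projCoord i u ∈ S} := by
  constructor
  · -- ω̄-Gröbner of L^i  →  ē-Gröbner of L
    intro h b x y hx hy
    have hπx : inFiber (L.map (projCoord i)) (projCoord i b) (projCoord i x) :=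
      ⟨fun m => hx.1 _, by
        have := AddSubgroup.mem_map_of_mem (projCoord i) hx.2
        rwa [map_sub] at this⟩
    have hπy : inFiber (L.map (projCoord i)) (projCoord i b) (projCoord i y) :=
      ⟨fun m => hy.1 _, by
        have := AddSubgroup.mem_map_of_mem (projCoord i) hy.2
        rwa [map_sub] at this⟩
    obtain ⟨k, q, hq, hq0, hqk, hred⟩ := h (projCoord i b) (projCoord i x) (projCoord i y) hπx hπy
    have liftEx : ∀ v, v ∈ L.map (projCoord i) → ∃ u, u ∈ L ∧ projCoord i u = v := by
      intro v hv
      rcases AddSubgroup.mem_map.mp hv with ⟨u, hu, h'⟩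
      exact ⟨u, hu, h'⟩
    choose! lift hliftL hliftP using liftEx
    have hmem : ∀ j, j ≤ k → q j - projCoord i x ∈ L.map (projCoord i) := by
      intro j hj
      have h1 := (hq.1 j hj).2
      have h2 := hπx.2
      have := sub_mem h1 h2
      simpa using this
    set u : ℕ → Fin (n+1) → ℤ := fun j => lift (q j - projCoord i x) with hu'
    have huL : ∀ j, j ≤ k → u j ∈ L := fun j hj => hliftL _ (hmem j hj)
    have huP : ∀ j, j ≤ k → projCoord i (u j) = q j - projCoord i x :=
      fun j hj => hliftP _ (hmem j hj)
    set p : ℕ → Fin (n+1) → ℤ := fun j => x + u j with hp'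
    have inj : ∀ a ∈ L, ∀ c ∈ L, projCoord i a = projCoord i c → a = c := by
      intro a ha c hc hac
      have h0 : a - c = 0 := hker (a - c) (sub_mem ha hc) (by rw [map_sub, hac, sub_self])
      exact sub_eq_zero.mp h0
    have hcoord : ∀ j, j ≤ k → ((u j i : ℤ) : ℚ) = qdot ω (q j) - qdot ω (projCoord i x) := by
      intro j hj
      have h' := hω (u j) (huL j hj)
      rw [huP j hj, qdot_sub'] at h'
      linarith
    have hyx : y - x ∈ L := by
      have := sub_mem hy.2 hx.2
      simpa using this
    have hyq : ((y i : ℤ) : ℚ) = (x i : ℚ) + qdot ω (projCoord i y) - qdot ω (projCoord i x) := by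
      have h' := hω (y - x) hyx
      rw [map_sub, qdot_sub'] at h'
      simp only [Pi.sub_apply] at h'
      push_cast at h'
      linarith
    have hu0 : u 0 = 0 := by
      apply inj _ (huL 0 (Nat.zero_le _)) _ (zero_mem L)
      rw [huP 0 (Nat.zero_le _), hq0, sub_self, map_zero]
    have huk : u k = y - x := by
      apply inj _ (huL k le_rfl) _ hyx
      rw [huP k le_rfl, hqk, map_sub]
    have hp0 : p 0 = x := by simp [hp', hu0]
    have hpk : p k = y := by simp [hp', huk]
    have hfiber : ∀ j, j ≤ k → inFiber L b (p j) := by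
      intro j hj
      constructor
      · intro j'
        by_cases hji : j' = i
        · subst hji
          show 0 ≤ x j' + u j j'
          rcases Nat.eq_zero_or_pos j with h0 | h0
          · subst h0; rw [hu0]; simpa using hx.1 j'
          rcases eq_or_lt_of_le hj with hk' | hk'
          · subst hk'; rw [huk]; simpa using hy.1 j'
          have hnr := hred j h0 hk'
          rw [not_and_or] at hnr
          have key : (0:ℚ) ≤ (x j' : ℚ) + (u j j' : ℚ) := by
            rcases hnr with h' | h'
            · push_neg at h'
              rw [qdot_neg', qdot_neg'] at h'
              have hx0 : (0:ℚ) ≤ (x j' : ℚ) := by exact_mod_cast hx.1 j'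
              have := hcoord j hj
              linarith
            · push_neg at h'
              rw [qdot_neg', qdot_neg'] at h'
              have hy0 : (0:ℚ) ≤ (y j' : ℚ) := by exact_mod_cast hy.1 j'
              have := hcoord j hj
              linarith
          exact_mod_cast key
        · obtain ⟨m, hm⟩ := Fin.exists_succAbove_eq hji
          subst hm
          show 0 ≤ x (i.succAbove m) + u j (i.succAbove m)
          have hval : u j (i.succAbove m) = q j m - projCoord i x m := by
            have := congrFun (huP j hj) m
            exact this
          have hxm : projCoord i x m = x (i.succAbove m) := rfl
          rw [hval, hxm]
          have := (hq.1 j hj).1 m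
          linarith
      · have : p j - b = u j + (x - b) := by
          show x + u j - b = u j + (x - b)
          abel
        rw [this]
        exact add_mem (huL j hj) hx.2
    refine ⟨k, p, ⟨hfiber, ?_⟩, hp0, hpk, ?_⟩
    · intro j hj
      rcases hq.2 j hj with hs | hs
      · refine Or.inl ⟨?_, ?_⟩
        · have : p j - p (j+1) = u j - u (j+1) := by show x + u j - (x + u (j+1)) = _; abel
          rw [this]; exact sub_mem (huL j hj.le) (huL (j+1) hj)
        · have : p j - p (j+1) = u j - u (j+1) := by show x + u j - (x + u (j+1)) = _; abel
          rw [this, map_sub, huP j hj.le, huP (j+1) hj]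
          simpa using hs
      · refine Or.inr ⟨?_, ?_⟩
        · have : p (j+1) - p j = u (j+1) - u j := by show x + u (j+1) - (x + u j) = _; abel
          rw [this]; exact sub_mem (huL (j+1) hj) (huL j hj.le)
        · have : p (j+1) - p j = u (j+1) - u j := by show x + u (j+1) - (x + u j) = _; abel
          rw [this, map_sub, huP j hj.le, huP (j+1) hj]
          simpa using hs
    · intro j hj0 hjk hcon
      apply hred j hj0 hjk
      rw [qdot_ebar', qdot_ebar', qdot_ebar'] at hcon
      have hpji : ((p j i : ℤ) : ℚ) = (x i : ℚ) + ((u j i : ℤ) : ℚ) := by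
        show (((x + u j) i : ℤ) : ℚ) = _
        push_cast [Pi.add_apply]
        ring
      have hc := hcoord j hjk.le
      constructor
      · rw [qdot_neg', qdot_neg']
        have h1 := hcon.1
        have : ((p j i : ℤ) : ℚ) < ((x i : ℤ) : ℚ) := by linarith [hcon.1]
        linarith
      · rw [qdot_neg', qdot_neg']
        have : ((p j i : ℤ) : ℚ) < ((y i : ℤ) : ℚ) := by linarith [hcon.2]
        linarith
  · -- ē-Gröbner of L  →  ω̄-Gröbner of L^i
    intro h bb xb yb hxb hyb
    have hmem : xb - yb ∈ L.map (projCoord i) := by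
      have := sub_mem hxb.2 hyb.2
      simpa using this
    obtain ⟨u, huL, huP⟩ := AddSubgroup.mem_map.mp hmem
    set t : ℤ := max (u i) 0 with ht
    set x : Fin (n+1) → ℤ := Fin.insertNth i t xb with hx'
    set y : Fin (n+1) → ℤ := Fin.insertNth i (t - u i) yb with hy'
    have hπxb : projCoord i x = xb := projCoord_insertNth ..
    have hπyb : projCoord i y = yb := projCoord_insertNth ..
    have hxi : x i = t := by simp [hx']
    have hyi : y i = t - u i := by simp [hy']
    have hxy : x - y = u := by
      funext j
      by_cases hji : j = i
      · subst hji
        show x j - y j = u j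
        rw [hxi, hyi]; ring
      · obtain ⟨m, hm⟩ := Fin.exists_succAbove_eq hji
        subst hm
        show x (i.succAbove m) - y (i.succAbove m) = u (i.succAbove m)
        have h1 : x (i.succAbove m) = xb m := congrFun hπxb m
        have h2 : y (i.succAbove m) = yb m := congrFun hπyb m
        have h3 : u (i.succAbove m) = xb m - yb m := by
          have := congrFun huP m
          exact this
        rw [h1, h2, h3]
    have hxnn : Nonneg x := by
      intro j
      by_cases hji : j = i
      · subst hji; rw [hxi]; exact le_max_right _ _
      · obtain ⟨m, hm⟩ := Fin.exists_succAbove_eq hji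
        subst hm
        have h1 : x (i.succAbove m) = xb m := congrFun hπxb m
        rw [h1]; exact hxb.1 m
    have hynn : Nonneg y := by
      intro j
      by_cases hji : j = i
      · rw [hji, hyi]
        have h1 : u i ≤ t := le_max_left _ _
        omega
      · obtain ⟨m, hm⟩ := Fin.exists_succAbove_eq hji
        subst hm
        have h2 : y (i.succAbove m) = yb m := congrFun hπyb m
        rw [h2]; exact hyb.1 m
    have hx0 : inFiber L x x := ⟨hxnn, by simpa using zero_mem L⟩
    have hy0 : inFiber L x y := ⟨hynn, by
      have : y - x = -(x - y) := by abel
      rw [this, hxy]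
      exact neg_mem huL⟩
    obtain ⟨k, p, hp, hp0, hpk, hred⟩ := h x x y hx0 hy0
    have key : ∀ w, w - x ∈ L →
        ((w i : ℤ) : ℚ) = qdot ω (projCoord i w) - qdot ω xb + (x i : ℚ) := by
      intro w hw
      have h' := hω _ hw
      rw [map_sub, hπxb, qdot_sub'] at h'
      simp only [Pi.sub_apply] at h'
      push_cast at h'
      linarith
    refine ⟨k, fun j => projCoord i (p j), ⟨?_, ?_⟩, ?_, ?_, ?_⟩
    · intro j hj
      refine ⟨fun m => (hp.1 j hj).1 _, ?_⟩
      have heq : projCoord i (p j) - bb = projCoord i (p j - x) + (xb - bb) := by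
        rw [map_sub, hπxb]; abel
      rw [heq]
      exact add_mem (AddSubgroup.mem_map_of_mem _ (hp.1 j hj).2) hxb.2
    · intro j hj
      rcases hp.2 j hj with hs | hs
      · exact Or.inl (by rw [← map_sub]; exact hs.2)
      · exact Or.inr (by rw [← map_sub]; exact hs.2)
    · show projCoord i (p 0) = xb
      rw [hp0, hπxb]
    · show projCoord i (p k) = yb
      rw [hpk, hπyb]
    · intro j hj0 hjk hcon
      apply hred j hj0 hjk
      simp only [qdot_neg'] at hcon
      obtain ⟨hc1, hc2⟩ := hcon
      have hc1' : qdot ω (projCoord i (p j)) < qdot ω xb := by linarith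
      have hc2' : qdot ω (projCoord i (p j)) < qdot ω yb := by linarith
      have h1 := key (p j) (hp.1 j hjk.le).2
      have h2 := key y hy0.2
      rw [hπyb] at h2
      rw [qdot_ebar', qdot_ebar', qdot_ebar']
      constructor
      · have hlt : ((p j i : ℤ) : ℚ) < ((x i : ℤ) : ℚ) := by linarith
        have : (p j i) < x i := by exact_mod_cast hlt
        push_cast
        linarith
      · have hlt : ((p j i : ℤ) : ℚ) < ((y i : ℤ) : ℚ) := by linarith
        have : (p j i) < y i := by exact_mod_cast hlt
        push_cast
        linarith
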